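/- Let α, β : ℤ × ℝ → ℂ be differentiable in t, let p₋, p₊ ∈ ℕ, and suppose that for each t ∈ ℝ the families f_{ℓ,±}(·,t), g_{ℓ,±}(·,t), h_{ℓ,±}(·,t) satisfy the Ablowitz–Ladik recursion for (α(·,t), β(·,t)). If (α, β) satisfies the p-th Ablowitz–Ladik system, i.e., −i∂ₜα − α(g_{p₊,+} + g_{p₋,−}⁻) + f_{p₊−1,+} − f_{p₋−1,−}⁻ = 0 and −i∂ₜβ + β(g_{p₊,+}⁻ + g_{p₋,−}) − h_{p₋−1,−} + h_{p₊−1,+}⁻ = 0 on ℤ × ℝ, then γ := 1 − αβ satisfies ∂ₜγ = iγ·((g_{p₊,+} − g_{p₊,+}⁻) − (g_{p₋,−} − g_{p₋,−}⁻)) on ℤ × ℝ. -/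

import Mathlib

/-- The `+`-half of the Ablowitz–Ladik recursion for `(α, β)` with constant `c0p`. -/
structure ALRecPlus (α β : ℤ → ℂ) (c0p : ℂ) (f g h : ℕ → ℤ → ℂ) : Prop where
  g0 : ∀ n : ℤ, g 0 n = c0p / 2
  f0 : ∀ n : ℤ, f 0 n = -(c0p * α (n + 1))
  h0 : ∀ n : ℤ, h 0 n = c0p * β n
  g_step : ∀ (ℓ : ℕ) (n : ℤ),
    g (ℓ + 1) n - g (ℓ + 1) (n - 1) = α n * h ℓ (n - 1) + β n * f ℓ n
  f_step : ∀ (ℓ : ℕ) (n : ℤ),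
    f (ℓ + 1) (n - 1) = f ℓ n - α n * (g (ℓ + 1) n + g (ℓ + 1) (n - 1))
  h_step : ∀ (ℓ : ℕ) (n : ℤ),
    h (ℓ + 1) n = h ℓ (n - 1) + β n * (g (ℓ + 1) n + g (ℓ + 1) (n - 1))

/-- The `−`-half of the Ablowitz–Ladik recursion for `(α, β)` with constant `c0m`. -/
structure ALRecMinus (α β : ℤ → ℂ) (c0m : ℂ) (f g h : ℕ → ℤ → ℂ) : Prop where
  g0 : ∀ n : ℤ, g 0 n = c0m / 2
  f0 : ∀ n : ℤ, f 0 n = c0m * α n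
  h0 : ∀ n : ℤ, h 0 n = -(c0m * β (n + 1))
  g_step : ∀ (ℓ : ℕ) (n : ℤ),
    g (ℓ + 1) n - g (ℓ + 1) (n - 1) = α n * h ℓ n + β n * f ℓ (n - 1)
  f_step : ∀ (ℓ : ℕ) (n : ℤ),
    f (ℓ + 1) n = f ℓ (n - 1) + α n * (g (ℓ + 1) n + g (ℓ + 1) (n - 1))
  h_step : ∀ (ℓ : ℕ) (n : ℤ),
    h (ℓ + 1) (n - 1) = h ℓ n - β n * (g (ℓ + 1) n + g (ℓ + 1) (n - 1))

/-- The (full) Ablowitz–Ladik recursion for `(α, β)` with constants `c0p, c0m`: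
the families `fp, gp, hp` satisfy the `+`-half and `fm, gm, hm` the `−`-half. -/
structure ALRecursion (α β : ℤ → ℂ) (c0p c0m : ℂ)
    (fp gp hp fm gm hm : ℕ → ℤ → ℂ) : Prop where
  plus : ALRecPlus α β c0p fp gp hp
  minus : ALRecMinus α β c0m fm gm hm

/-- If `(α, β)` satisfies the `p`-th (time-dependent) Ablowitz–Ladik system, then
`γ = 1 − αβ` satisfies `∂ₜγ = iγ((g_{p₊,+} − g_{p₊,+}⁻) − (g_{p₋,−} − g_{p₋,−}⁻))`. -/
theorem gamma_time_derivative (α β αt βt : ℤ → ℝ → ℂ) (c0p c0m : ℂ)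
    (fp gp hp fm gm hm : ℕ → ℤ → ℝ → ℂ)
    (hα : ∀ (n : ℤ) (t : ℝ), HasDerivAt (α n) (αt n t) t)
    (hβ : ∀ (n : ℤ) (t : ℝ), HasDerivAt (β n) (βt n t) t)
    (hrec : ∀ t : ℝ, ALRecursion (fun n => α n t) (fun n => β n t) c0p c0m
      (fun ℓ n => fp ℓ n t) (fun ℓ n => gp ℓ n t) (fun ℓ n => hp ℓ n t)
      (fun ℓ n => fm ℓ n t) (fun ℓ n => gm ℓ n t) (fun ℓ n => hm ℓ n t))
    (pm pp : ℕ) (hpm : 1 ≤ pm) (hpp : 1 ≤ pp)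
    (heq1 : ∀ (n : ℤ) (t : ℝ),
      -Complex.I * αt n t - α n t * (gp pp n t + gm pm (n - 1) t)
        + fp (pp - 1) n t - fm (pm - 1) (n - 1) t = 0)
    (heq2 : ∀ (n : ℤ) (t : ℝ),
      -Complex.I * βt n t + β n t * (gp pp (n - 1) t + gm pm n t)
        - hm (pm - 1) n t + hp (pp - 1) (n - 1) t = 0) :
    ∀ (n : ℤ) (t : ℝ),
      HasDerivAt (fun s => 1 - α n s * β n s)
        (Complex.I * (1 - α n t * β n t)
          * ((gp pp n t - gp pp (n - 1) t) - (gm pm n t - gm pm (n - 1) t))) t := by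
  intro n t
  have h1 := ((hα n t).mul (hβ n t)).const_sub 1
  convert h1 using 1
  · rfl
  · rfl
  have hg := (hrec t).plus.g_step (pp - 1) n
  have hgm := (hrec t).minus.g_step (pm - 1) n
  rw [Nat.sub_add_cancel hpp] at hg
  rw [Nat.sub_add_cancel hpm] at hgm
  have e1 := heq1 n t
  have e2 := heq2 n t
  have hI : Complex.I * Complex.I = -1 := Complex.I_mul_I

  linear_combination (β n t * Complex.I) * e1 + (α n t * Complex.I) * e2 +
    Complex.I * hg - Complex.I * hgm +
    (β n t * αt n t + α n t * βt n t) * hI
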